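/- arXiv:2512.06478 — 8 statements merged into one kernel-verified Lean document; each statement's English description precedes it below -/
import Mathlib

section
/- Let F be a field, S ⊆ F with |S| = n, k ≤ n, and r : S → F any function. If p and p' are distinct polynomials over F of degree less than k, then it is not possible that both p and p' disagree with r on at most (n-k)/2 points of S each. In other words, there is at most one polynomial of degree < k agreeing with r on more than (n+k)/2 points. -/
/-- Unique decoding guarantee: two distinct polynomials of degree `< k` cannot both
disagree with a received word `r` on at most `(n-k)/2` points of `S` each. -/
theorem stmt_3 {F : Type*} [Field F] [DecidableEq F] {n k : ℕ}
    (S : Finset F) (hS : S.card = n) (hkn : k ≤ n) (r : F → F)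
    (p p' : Polynomial F) (hne : p ≠ p')
    (hp : p.degree < (k : WithBot ℕ)) (hp' : p'.degree < (k : WithBot ℕ)) :
    ¬(((S.filter fun a => p.eval a ≠ r a).card : ℝ) ≤ ((n : ℝ) - k) / 2 ∧
      ((S.filter fun a => p'.eval a ≠ r a).card : ℝ) ≤ ((n : ℝ) - k) / 2) := by
  rintro ⟨h1, h2⟩
  set B1 := S.filter fun a => p.eval a ≠ r a with hB1
  set B2 := S.filter fun a => p'.eval a ≠ r a with hB2
  set T := S.filter fun a => p.eval a = r a ∧ p'.eval a = r a with hT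
  set q := p - p' with hq
  have hq0 : q ≠ 0 := sub_ne_zero.mpr hne
  have hqd : q.degree < (k : WithBot ℕ) :=
    lt_of_le_of_lt (Polynomial.degree_sub_le p p') (max_lt hp hp')
  have hk0 : k ≠ 0 := by
    rintro rfl
    simp only [Nat.cast_zero] at hqd
    exact hq0 (Polynomial.degree_eq_bot.mp (Nat.WithBot.lt_zero_iff.mp hqd))
  have hqnd : q.natDegree < k := (Polynomial.natDegree_lt_iff_degree_lt hq0).mpr hqd
  -- bound on bad sets' cards
  have hBcard : B1.card + B2.card ≤ n - k := by
    have : (B1.card : ℝ) + B2.card ≤ (n : ℝ) - k := by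
      calc (B1.card : ℝ) + B2.card ≤ ((n:ℝ)-k)/2 + ((n:ℝ)-k)/2 := add_le_add h1 h2
        _ = (n:ℝ) - k := by ring
    have h' : ((B1.card + B2.card : ℕ) : ℝ) ≤ ((n - k : ℕ) : ℝ) := by
      push_cast [Nat.cast_sub hkn]
      push_cast at this
      linarith
    exact_mod_cast h'
  -- T is big
  have hTcard : k ≤ T.card := by
    have hsub : S \ T ⊆ B1 ∪ B2 := by
      intro a ha
      rw [Finset.mem_sdiff] at ha
      obtain ⟨haS, h⟩ := ha
      rw [hT, Finset.mem_filter] at h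
      rw [Finset.mem_union, hB1, hB2, Finset.mem_filter, Finset.mem_filter]
      by_cases hpe : p.eval a = r a
      · exact Or.inr ⟨haS, fun h' => h ⟨haS, hpe, h'⟩⟩
      · exact Or.inl ⟨haS, hpe⟩
    have h1' : (S \ T).card ≤ B1.card + B2.card :=
      le_trans (Finset.card_le_card hsub) (Finset.card_union_le _ _)
    have hTS : T ⊆ S := Finset.filter_subset _ _
    have : S.card - T.card ≤ n - k := le_trans (by rw [Finset.card_sdiff_of_subset hTS] at h1'; exact h1') hBcard
    omega
  -- T's elements are roots of q
  have hroots : T.card ≤ q.natDegree := by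
    have hsub : T ⊆ q.roots.toFinset := by
      intro a ha
      simp only [hT, Finset.mem_filter] at ha
      rw [Multiset.mem_toFinset, Polynomial.mem_roots hq0]
      simp [Polynomial.IsRoot, hq, ha.2.1, ha.2.2]
    calc T.card ≤ q.roots.toFinset.card := Finset.card_le_card hsub
      _ ≤ Multiset.card q.roots := q.roots.toFinset_card_le
      _ ≤ q.natDegree := q.card_roots'
  omega
end

section
/- (Bivariate interpolation) Let F be a finite field, S ⊆ F with |S| = n, and r : S → F any function. Let D be a natural number with (D+1)^2 > n. Then there exists a nonzero bivariate polynomial Q(X,Y) ∈ F[X,Y] with deg_X(Q) ≤ D and deg_Y(Q) ≤ D such that Q(a, r(a)) = 0 for all a ∈ S. -/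
open MvPolynomial Finsupp in
/-- Bivariate interpolation: if `(D+1)^2 > n` then there is a nonzero bivariate
polynomial `Q` with individual degrees at most `D` vanishing on `(a, r a)` for all
`a ∈ S`, where `|S| = n`. -/
theorem stmt_4 {F : Type*} [Field F] [Fintype F] {n D : ℕ}
    (S : Finset F) (hS : S.card = n) (r : F → F) (hD : n < (D + 1) ^ 2) :
    ∃ Q : MvPolynomial (Fin 2) F, Q ≠ 0 ∧
      MvPolynomial.degreeOf 0 Q ≤ D ∧ MvPolynomial.degreeOf 1 Q ≤ D ∧
      ∀ a ∈ S, MvPolynomial.eval ![a, r a] Q = 0 := by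
  classical
  -- the evaluation linear map
  set ι := Fin (D + 1) × Fin (D + 1)
  let f : (ι → F) →ₗ[F] (↥S → F) :=
    { toFun := fun c a => ∑ p : ι, c p * ((a : F) ^ (p.1 : ℕ) * (r a) ^ (p.2 : ℕ))
      map_add' := by
        intro x y; funext a; simp [add_mul, Finset.sum_add_distrib]
      map_smul' := by
        intro m x; funext a; simp [Finset.mul_sum, mul_assoc] }
  have hdim : Module.finrank F (↥S → F) < Module.finrank F (ι → F) := by
    have hcard : Fintype.card ι = (D + 1) ^ 2 := by simp [ι, sq]
    simp only [Module.finrank_fintype_fun_eq_card, Fintype.card_coe, hS, hcard]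
    exact hD
  have hninj : ¬ Function.Injective f := fun h =>
    absurd (LinearMap.finrank_le_finrank_of_injective h) (not_le.mpr hdim)
  rw [← LinearMap.ker_eq_bot] at hninj
  obtain ⟨c, hc, hc0⟩ := (Submodule.ne_bot_iff _).mp hninj
  -- the exponent map
  let e : ι → (Fin 2 →₀ ℕ) := fun p => Finsupp.single 0 (p.1 : ℕ) + Finsupp.single 1 (p.2 : ℕ)
  have he : Function.Injective e := by
    intro p q h
    have h0 := DFunLike.congr_fun h 0
    have h1 := DFunLike.congr_fun h 1
    simp [e, Finsupp.single_apply] at h0 h1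
    exact Prod.ext (Fin.val_injective h0) (Fin.val_injective h1)
  set Q : MvPolynomial (Fin 2) F := ∑ p : ι, monomial (e p) (c p) with hQ
  have hcoeff : ∀ q : ι, MvPolynomial.coeff (e q) Q = c q := by
    intro q
    rw [hQ, MvPolynomial.coeff_sum, Finset.sum_eq_single q]
    · simp [coeff_monomial]
    · intro p _ hpq
      rw [coeff_monomial, if_neg (fun h => hpq (he h))]
    · simp
  have hsupp : ∀ m ∈ Q.support, ∃ p : ι, m = e p := by
    intro m hm
    rw [MvPolynomial.mem_support_iff, hQ, MvPolynomial.coeff_sum] at hm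
    obtain ⟨p, _, hp⟩ := Finset.exists_ne_zero_of_sum_ne_zero hm
    rw [coeff_monomial] at hp
    exact ⟨p, by by_contra h; exact hp (if_neg (Ne.symm h))⟩
  refine ⟨Q, ?_, ?_, ?_, ?_⟩
  · -- nonzero
    intro h
    obtain ⟨q, hq⟩ := Function.ne_iff.mp hc0
    exact hq (by rw [← hcoeff q, h, coeff_zero]; rfl)
  · rw [degreeOf_le_iff]
    intro m hm
    obtain ⟨p, rfl⟩ := hsupp m hm
    simp [e, Finsupp.single_apply]
    omega
  · rw [degreeOf_le_iff]
    intro m hm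
    obtain ⟨p, rfl⟩ := hsupp m hm
    simp [e, Finsupp.single_apply]
    omega
  · intro a ha
    have := congrFun hc ⟨a, ha⟩
    simp only [LinearMap.zero_apply, Pi.zero_apply] at this
    rw [hQ, map_sum]
    have heval : ∀ p : ι, MvPolynomial.eval ![a, r a] (monomial (e p) (c p)) =
        c p * (a ^ (p.1 : ℕ) * (r a) ^ (p.2 : ℕ)) := by
      intro p
      rw [eval_monomial]
      simp [e, Finsupp.prod_add_index, Finsupp.prod_single_index, pow_add]
    calc ∑ p : ι, MvPolynomial.eval ![a, r a] (monomial (e p) (c p))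
        = ∑ p : ι, c p * (a ^ (p.1 : ℕ) * (r a) ^ (p.2 : ℕ)) :=
          Finset.sum_congr rfl fun p _ => heval p
      _ = 0 := this
end

section
/- (Bézout-type lemma for graphs of polynomials) Let F be a field, Q(X,Y) ∈ F[X,Y] nonzero with deg_X(Q) ≤ D_x and deg_Y(Q) ≤ D_y, and p(X) ∈ F[X] of degree d. If the set Z = {(a,b) ∈ F² : Q(a,b) = 0 and b = p(a)} has size strictly greater than D_x + d·D_y, then (Y - p(X)) divides Q(X,Y) in F[X,Y]. -/
lemma aux_dvd {F : Type*} [CommRing F] (P : MvPolynomial (Fin 2) F)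
    (Q : MvPolynomial (Fin 2) F) :
    (MvPolynomial.X 1 - P) ∣ (Q - MvPolynomial.aeval ![MvPolynomial.X 0, P] Q) := by
  induction Q using MvPolynomial.induction_on with
  | C a => simp
  | add f g hf hg =>
      have : f + g - MvPolynomial.aeval ![MvPolynomial.X 0, P] (f + g)
          = (f - MvPolynomial.aeval ![MvPolynomial.X 0, P] f)
            + (g - MvPolynomial.aeval ![MvPolynomial.X 0, P] g) := by
        rw [map_add]; ring
      rw [this]; exact dvd_add hf hg
  | mul_X f i hf =>
      have : f * MvPolynomial.X i - MvPolynomial.aeval ![MvPolynomial.X 0, P] (f * MvPolynomial.X i)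
          = (f - MvPolynomial.aeval ![MvPolynomial.X 0, P] f) * MvPolynomial.X i
            + MvPolynomial.aeval ![MvPolynomial.X 0, P] f
              * (MvPolynomial.X i - ![MvPolynomial.X 0, P] i) := by
        rw [map_mul, MvPolynomial.aeval_X]; ring
      rw [this]
      refine dvd_add (hf.mul_right _) (Dvd.dvd.mul_left ?_ _)
      fin_cases i
      · simp
      · simp

/-- Bézout-type lemma for graphs of polynomials: if `Q(X,Y)` (with `deg_X Q ≤ Dx`,
`deg_Y Q ≤ Dy`) vanishes on more than `Dx + d·Dy` points of the graph of a degree-`d`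
polynomial `p`, then `Y - p(X)` divides `Q`. -/
theorem stmt_5 {F : Type*} [Field F] {Dx Dy d : ℕ}
    (Q : MvPolynomial (Fin 2) F) (hQ : Q ≠ 0)
    (hDx : MvPolynomial.degreeOf 0 Q ≤ Dx) (hDy : MvPolynomial.degreeOf 1 Q ≤ Dy)
    (p : Polynomial F) (hd : p.natDegree = d)
    (Z : Finset (F × F))
    (hZ : ∀ z ∈ Z, MvPolynomial.eval ![z.1, z.2] Q = 0 ∧ z.2 = p.eval z.1)
    (hcard : Dx + d * Dy < Z.card) :
    (MvPolynomial.X 1 - Polynomial.aeval (MvPolynomial.X 0) p) ∣ Q := by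
  classical
  set g : Polynomial F := MvPolynomial.aeval ![Polynomial.X, p] Q with hg
  -- evaluation of g
  have heval : ∀ a : F, g.eval a = MvPolynomial.eval ![a, p.eval a] Q := by
    intro a
    have h1 : g.eval a = Polynomial.aeval a g := by simp
    rw [h1, hg]
    rw [MvPolynomial.comp_aeval_apply (f := ![Polynomial.X, p]) (Polynomial.aeval a) Q]
    have h2 : (fun i => Polynomial.aeval a (![Polynomial.X, p] i)) = ![a, p.eval a] := by
      funext i; fin_cases i <;> simp
    rw [h2]
    rw [MvPolynomial.aeval_def, Algebra.algebraMap_self]; rfl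
  -- degree bound on g
  have hdeg : g.natDegree ≤ Dx + d * Dy := by
    rw [hg, ← MvPolynomial.support_sum_monomial_coeff Q, map_sum]
    apply Polynomial.natDegree_sum_le_of_forall_le
    intro m hm
    rw [MvPolynomial.aeval_monomial]
    have hprod : (m.prod fun i k => (![Polynomial.X, p] : Fin 2 → Polynomial F) i ^ k)
        = Polynomial.X ^ m 0 * p ^ m 1 := by
      rw [Finsupp.prod_fintype _ _ (fun i => pow_zero _), Fin.prod_univ_two]
      simp
    rw [hprod]
    calc (algebraMap F (Polynomial F) (MvPolynomial.coeff m Q)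
            * (Polynomial.X ^ m 0 * p ^ m 1)).natDegree
        ≤ (algebraMap F (Polynomial F) (MvPolynomial.coeff m Q)).natDegree
          + (Polynomial.X ^ m 0 * p ^ m 1).natDegree := Polynomial.natDegree_mul_le
      _ ≤ 0 + ((Polynomial.X ^ m 0 : Polynomial F).natDegree + (p ^ m 1).natDegree) := by
          gcongr
          · exact le_of_eq (Polynomial.natDegree_C _)
          · exact Polynomial.natDegree_mul_le
      _ ≤ m 0 + m 1 * d := by
          rw [zero_add]
          gcongr
          · exact le_of_eq (Polynomial.natDegree_X_pow _)
          · calc (p ^ m 1).natDegree ≤ m 1 * p.natDegree := Polynomial.natDegree_pow_le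
              _ = m 1 * d := by rw [hd]
      _ ≤ Dx + d * Dy := by
          have h0 : m 0 ≤ Dx := by
            refine le_trans ?_ hDx
            rw [MvPolynomial.degreeOf_eq_sup]
            exact Finset.le_sup (f := fun m => m 0) hm
          have h1' : m 1 ≤ Dy := by
            refine le_trans ?_ hDy
            rw [MvPolynomial.degreeOf_eq_sup]
            exact Finset.le_sup (f := fun m => m 1) hm
          calc m 0 + m 1 * d ≤ Dx + Dy * d := by gcongr
            _ = Dx + d * Dy := by ring
  -- g vanishes at > natDegree points, so g = 0
  have hg0 : g = 0 := by
    apply Polynomial.eq_zero_of_natDegree_lt_card_of_eval_eq_zero' g (Z.image Prod.fst)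
    · intro a ha
      obtain ⟨z, hz, rfl⟩ := Finset.mem_image.mp ha
      have h2 := (hZ z hz).2
      rw [heval, ← h2]
      exact (hZ z hz).1
    · have hZinj : Set.InjOn Prod.fst (Z : Set (F × F)) := by
        intro z1 h1 z2 h2 he
        have e1 := (hZ z1 h1).2
        have e2 := (hZ z2 h2).2
        exact Prod.ext he (by rw [e1, e2, he])
      rw [Finset.card_image_of_injOn hZinj]
      exact lt_of_le_of_lt hdeg hcard
  -- conclude divisibility
  have hSQ : MvPolynomial.aeval ![MvPolynomial.X 0, Polynomial.aeval (MvPolynomial.X 0) p] Q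
      = Polynomial.aeval (MvPolynomial.X 0 : MvPolynomial (Fin 2) F) g := by
    rw [hg, MvPolynomial.comp_aeval_apply (f := ![Polynomial.X, p])
      (Polynomial.aeval (MvPolynomial.X 0 : MvPolynomial (Fin 2) F)) Q]
    have hf : (fun i => Polynomial.aeval (MvPolynomial.X 0 : MvPolynomial (Fin 2) F)
          (![Polynomial.X, p] i))
        = ![MvPolynomial.X 0, Polynomial.aeval (MvPolynomial.X 0) p] := by
      funext i; fin_cases i <;> simp
    rw [hf]
  have hdvd := aux_dvd (Polynomial.aeval (MvPolynomial.X 0) p) Q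
  rwa [hSQ, hg0, map_zero, sub_zero] at hdvd
end

section
/- Let F be a field, Q(X,Y) ∈ F[X,Y], and p(X) ∈ F[X] with deg p ≤ k-1. If Q has (1,k-1)-weighted degree at most D and the set {(a, p(a)) : a ∈ F, Q(a, p(a)) = 0} has size greater than D, then (Y - p(X)) divides Q(X,Y). -/
open MvPolynomial Polynomial

/-- Weighted-degree Bézout-type lemma: if `Q` has `(1, k-1)`-weighted degree at most `D`
and vanishes at `(a, p a)` for more than `D` values `a`, where `deg p ≤ k-1`, then
`Y - p(X)` divides `Q`. -/
theorem stmt_6 {F : Type*} [Field F] {k D : ℕ} (hk : 1 ≤ k)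
    (Q : MvPolynomial (Fin 2) F)
    (hD : MvPolynomial.weightedTotalDegree ![1, k - 1] Q ≤ D)
    (p : Polynomial F) (hp : p.natDegree ≤ k - 1)
    (A : Finset F) (hA : ∀ a ∈ A, MvPolynomial.eval ![a, p.eval a] Q = 0)
    (hcard : D < A.card) :
    (MvPolynomial.X 1 - Polynomial.aeval (MvPolynomial.X 0) p) ∣ Q := by
  classical
  set P : MvPolynomial (Fin 2) F := Polynomial.aeval (MvPolynomial.X 0) p with hP
  set σ : MvPolynomial (Fin 2) F →ₐ[F] Polynomial F :=
    MvPolynomial.aeval ![Polynomial.X, p] with hσ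
  -- degree bound
  have hdeg : (σ Q).natDegree ≤ D := by
    conv_lhs => rw [Q.as_sum]
    rw [map_sum]
    refine (Polynomial.natDegree_sum_le _ _).trans ?_
    rw [Finset.fold_max_le]
    refine ⟨Nat.zero_le _, fun m hm => ?_⟩
    have hwm : (Finsupp.weight ![1, k - 1]) m ≤ D := by
      refine le_trans ?_ hD
      exact Finset.le_sup (f := fun s => (Finsupp.weight ![1, k-1]) s) hm
    have hwm' : m 0 * 1 + m 1 * (k - 1) ≤ D := by
      rwa [Finsupp.weight_apply, Finsupp.sum_fintype, Fin.sum_univ_two] at hwm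
      · intro i; simp
    simp only [Function.comp_apply, hσ, MvPolynomial.aeval_monomial]
    rw [Finsupp.prod_fintype _ _ (fun i => pow_zero _), Fin.prod_univ_two]
    simp only [Matrix.cons_val_zero, Matrix.cons_val_one, Matrix.head_cons]
    refine (Polynomial.natDegree_mul_le).trans ?_
    have h1 : (algebraMap F F[X] (MvPolynomial.coeff m Q)).natDegree = 0 :=
      Polynomial.natDegree_C _
    rw [h1, zero_add]
    refine (Polynomial.natDegree_mul_le).trans ?_
    refine le_trans (add_le_add (Polynomial.natDegree_X_pow _).le
      ((Polynomial.natDegree_pow_le).trans (Nat.mul_le_mul_left _ hp))) ?_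
    simpa [mul_comm] using hwm'
  -- σ Q = 0
  have hσQ : σ Q = 0 := by
    refine Polynomial.eq_zero_of_natDegree_lt_card_of_eval_eq_zero' (σ Q) A (fun a ha => ?_)
      (lt_of_le_of_lt hdeg hcard)
    have : (Polynomial.evalRingHom a).comp (σ : MvPolynomial (Fin 2) F →+* F[X])
        = (MvPolynomial.eval ![a, p.eval a] : MvPolynomial (Fin 2) F →+* F) := by
      apply MvPolynomial.ringHom_ext
      · intro r; simp [hσ]
      · intro i
        fin_cases i <;> simp [hσ]
    have h2 := congrArg (fun f => f Q) this
    simpa using h2.trans (hA a ha)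
  -- substitution hom
  set s : MvPolynomial (Fin 2) F →ₐ[F] MvPolynomial (Fin 2) F :=
    MvPolynomial.aeval ![MvPolynomial.X 0, P] with hs
  have hsQ : s Q = 0 := by
    have hcomp : ((Polynomial.aeval (MvPolynomial.X 0) : F[X] →ₐ[F] MvPolynomial (Fin 2) F).comp σ) = s := by
      apply MvPolynomial.algHom_ext
      intro i
      fin_cases i <;> simp [hσ, hs, hP, Polynomial.aeval_algHom_apply]
    have := congrArg (fun f => f Q) hcomp
    simp only [AlgHom.comp_apply] at this
    rw [← this, hσQ, map_zero]
  -- divisibility of Q - s Q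
  have key : ∀ R : MvPolynomial (Fin 2) F,
      (MvPolynomial.X 1 - P) ∣ (R - s R) := by
    intro R
    induction R using MvPolynomial.induction_on with
    | C c => simp [hs]
    | add q r hq hr =>
        have : q + r - s (q + r) = (q - s q) + (r - s r) := by rw [map_add]; ring
        rw [this]; exact dvd_add hq hr
    | mul_X q i hq =>
        have hx : q * MvPolynomial.X i - s (q * MvPolynomial.X i)
            = (q - s q) * MvPolynomial.X i + s q * (MvPolynomial.X i - s (MvPolynomial.X i)) := by
          rw [map_mul]; ring
        rw [hx]
        refine dvd_add (Dvd.dvd.mul_right hq _) (Dvd.dvd.mul_left ?_ _)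
        fin_cases i
        · simp [hs]
        · show MvPolynomial.X 1 - P ∣ MvPolynomial.X 1 - s (MvPolynomial.X 1)
          have : s (MvPolynomial.X 1) = P := by simp [hs]
          rw [this]
  have := key Q
  rwa [hsQ, sub_zero] at this
end

section
/- (Multiplicity Bézout-type lemma) Let F be a field, Q(X,Y) ∈ F[X,Y] nonzero with (1,k-1)-weighted degree at most D, p(X) ∈ F[X] of degree at most k-1, and m ≥ 1. Suppose A ⊆ F is a set of points a such that Q has a root of multiplicity at least m at (a, p(a)). If |A| > D/m, then (Y - p(X)) divides Q(X,Y). -/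
open MvPolynomial Polynomial

lemma keyA {F : Type*} [Field F] (Q : MvPolynomial (Fin 2) F) (p : Polynomial F)
    (h : MvPolynomial.aeval ![Polynomial.X, p] Q = 0) :
    (MvPolynomial.X 1 - Polynomial.aeval (MvPolynomial.X 0) p) ∣ Q := by
  let e : MvPolynomial (Fin 2) F ≃ₐ[F] Polynomial (MvPolynomial (Fin 1) F) :=
    (renameEquiv F (Equiv.swap (0 : Fin 2) 1)).trans (finSuccEquiv F 1)
  set P : MvPolynomial (Fin 1) F := Polynomial.aeval (MvPolynomial.X 0) p with hP
  have he1 : e (MvPolynomial.X 1) = Polynomial.X := by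
    simp [e, finSuccEquiv_X_zero]
  have he0 : e (MvPolynomial.X 0) = Polynomial.C (MvPolynomial.X 0) := by
    have h1 : ((1 : Fin 2)) = Fin.succ (0 : Fin 1) := rfl
    simp only [e, AlgEquiv.trans_apply, renameEquiv_apply, rename_X, Equiv.swap_apply_left, h1,
      finSuccEquiv_X_succ]
  have heP : e (Polynomial.aeval (MvPolynomial.X 0) p) = Polynomial.C P := by
    rw [← Polynomial.aeval_algHom_apply e (MvPolynomial.X 0) p, he0]
    exact Polynomial.aeval_algHom_apply
      (Polynomial.CAlgHom (R := F) (A := MvPolynomial (Fin 1) F)) (MvPolynomial.X 0) p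
  have hdvd : (Polynomial.X - Polynomial.C P) ∣ e Q := by
    rw [Polynomial.dvd_iff_isRoot, Polynomial.IsRoot, ← Polynomial.coe_aeval_eq_eval]
    have hcomp : (((Polynomial.aeval P).restrictScalars F).comp e.toAlgHom :
          MvPolynomial (Fin 2) F →ₐ[F] MvPolynomial (Fin 1) F)
        = (Polynomial.aeval (MvPolynomial.X 0 : MvPolynomial (Fin 1) F)).comp
            (MvPolynomial.aeval ![Polynomial.X, p]) := by
      apply MvPolynomial.algHom_ext
      intro i
      fin_cases i
      · show Polynomial.aeval P (e (MvPolynomial.X 0)) = _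
        simp [he0]
      · show Polynomial.aeval P (e (MvPolynomial.X 1)) = _
        simp [he1, hP]
    have := congrArg (fun f => f Q) hcomp
    simp only [AlgHom.coe_comp, Function.comp_apply, AlgHom.coe_restrictScalars'] at this
    show Polynomial.aeval P (e Q) = 0
    rw [show (e Q : Polynomial (MvPolynomial (Fin 1) F)) = e.toAlgHom Q from rfl]
    rw [this, h, map_zero]
  have := map_dvd e.symm hdvd
  rwa [map_sub, ← he1, ← heP, e.symm_apply_apply, e.symm_apply_apply, e.symm_apply_apply] at this

open MvPolynomial Polynomial

lemma keyB {F : Type*} [Field F] {k D : ℕ} (Q : MvPolynomial (Fin 2) F)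
    (hD : MvPolynomial.weightedTotalDegree ![1, k - 1] Q ≤ D)
    (p : Polynomial F) (hp : p.natDegree ≤ k - 1) :
    (MvPolynomial.aeval ![Polynomial.X, p] Q).natDegree ≤ D := by
  rw [MvPolynomial.aeval_def, MvPolynomial.eval₂_eq']
  apply Polynomial.natDegree_sum_le_of_forall_le
  intro d hd
  have hw : d 0 * 1 + d 1 * (k - 1) ≤ D := by
    refine le_trans (le_of_eq ?_) (le_trans (MvPolynomial.le_weightedTotalDegree ![1, k-1] hd) hD)
    rw [Finsupp.weight_apply, Finsupp.sum_fintype _ _ (fun i => by simp), Fin.sum_univ_two]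
    simp [smul_eq_mul]
  rw [Fin.prod_univ_two]
  simp only [Matrix.cons_val_zero, Matrix.cons_val_one, Matrix.head_cons]
  calc (algebraMap F (Polynomial F) (MvPolynomial.coeff d Q) * (Polynomial.X ^ d 0 * p ^ d 1)).natDegree
      ≤ (algebraMap F (Polynomial F) (MvPolynomial.coeff d Q)).natDegree +
        ((Polynomial.X ^ d 0 : Polynomial F).natDegree + (p ^ d 1).natDegree) :=
        le_trans (Polynomial.natDegree_mul_le) (by gcongr; exact Polynomial.natDegree_mul_le)
    _ ≤ 0 + (d 0 * 1 + d 1 * (k - 1)) := by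
        gcongr
        · exact le_of_eq (Polynomial.natDegree_C _)
        · simp
        · exact le_trans Polynomial.natDegree_pow_le (by gcongr)
    _ ≤ D := by omega

open MvPolynomial Polynomial

lemma keyC {F : Type*} [Field F] {m : ℕ} (Q : MvPolynomial (Fin 2) F) (p : Polynomial F) (a : F)
    (ha : ∀ d : Fin 2 →₀ ℕ, d 0 + d 1 < m →
      MvPolynomial.coeff d (MvPolynomial.aeval ![MvPolynomial.X 0 + MvPolynomial.C a,
        MvPolynomial.X 1 + MvPolynomial.C (p.eval a)] Q) = 0) :
    (Polynomial.X - Polynomial.C a) ^ m ∣ MvPolynomial.aeval ![Polynomial.X, p] Q := by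
  set Qa : MvPolynomial (Fin 2) F := MvPolynomial.aeval ![MvPolynomial.X 0 + MvPolynomial.C a,
      MvPolynomial.X 1 + MvPolynomial.C (p.eval a)] Q with hQa
  set ps : Polynomial F := p.comp (Polynomial.X + Polynomial.C a) - Polynomial.C (p.eval a)
    with hps
  have hXps : Polynomial.X ∣ ps := by
    rw [Polynomial.X_dvd_iff, hps, Polynomial.coeff_zero_eq_eval_zero]
    simp
  have h1 : (Polynomial.X : Polynomial F) ^ m ∣ MvPolynomial.aeval (R := F) ![Polynomial.X, ps] Qa := by
    rw [MvPolynomial.aeval_def, MvPolynomial.eval₂_eq']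
    apply Finset.dvd_sum
    intro d hd
    have hm : m ≤ d 0 + d 1 := by
      by_contra h
      exact (MvPolynomial.mem_support_iff.mp hd) (ha d (by omega))
    apply Dvd.dvd.mul_left
    rw [Fin.prod_univ_two]
    simp only [Matrix.cons_val_zero, Matrix.cons_val_one, Matrix.head_cons]
    calc (Polynomial.X : Polynomial F) ^ m ∣ Polynomial.X ^ (d 0 + d 1) := pow_dvd_pow _ hm
      _ ∣ Polynomial.X ^ d 0 * ps ^ d 1 := by
          rw [pow_add]; exact mul_dvd_mul dvd_rfl (pow_dvd_pow_of_dvd hXps _)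
  have h2 : MvPolynomial.aeval (R := F) ![Polynomial.X, ps] Qa
      = (MvPolynomial.aeval ![Polynomial.X, p] Q).comp (Polynomial.X + Polynomial.C a) := by
    rw [hQa, Polynomial.comp_eq_aeval]
    have hhom : ((MvPolynomial.aeval (R := F) ![Polynomial.X, ps]).comp
        (MvPolynomial.aeval ![MvPolynomial.X 0 + MvPolynomial.C a,
          MvPolynomial.X 1 + MvPolynomial.C (p.eval a)]) :
        MvPolynomial (Fin 2) F →ₐ[F] Polynomial F)
      = (Polynomial.aeval (Polynomial.X + Polynomial.C a)).comp
          (MvPolynomial.aeval ![Polynomial.X, p]) := by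
      apply MvPolynomial.algHom_ext
      intro i
      fin_cases i
      · simp
      · simp [hps, Polynomial.comp_eq_aeval]
    exact congrArg (fun f => f Q) hhom
  rw [h2] at h1
  obtain ⟨c, hc⟩ := h1
  have h3 : MvPolynomial.aeval ![Polynomial.X, p] Q
      = ((MvPolynomial.aeval ![Polynomial.X, p] Q).comp
          (Polynomial.X + Polynomial.C a)).comp (Polynomial.X - Polynomial.C a) := by
    rw [Polynomial.comp_assoc]
    simp [Polynomial.add_comp]
  rw [h3, hc, Polynomial.mul_comp, Polynomial.pow_comp, Polynomial.X_comp]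
  exact Dvd.intro _ rfl

/-- Multiplicity Bézout-type lemma: if a nonzero `Q` of `(1,k-1)`-weighted degree at most
`D` has roots of multiplicity at least `m` at `(a, p a)` for all `a` in a set `A` with
`|A| > D/m`, where `deg p ≤ k-1`, then `Y - p(X)` divides `Q`. -/
theorem stmt_9 {F : Type*} [Field F] {k D m : ℕ}
    (Q : MvPolynomial (Fin 2) F) (hQ : Q ≠ 0)
    (hD : MvPolynomial.weightedTotalDegree ![1, k - 1] Q ≤ D)
    (p : Polynomial F) (hp : p.natDegree ≤ k - 1) (hm : 1 ≤ m)
    (A : Finset F)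
    (hA : ∀ a ∈ A, ∀ d : Fin 2 →₀ ℕ, d 0 + d 1 < m →
      MvPolynomial.coeff d
        (MvPolynomial.aeval
          ![MvPolynomial.X 0 + MvPolynomial.C a,
            MvPolynomial.X 1 + MvPolynomial.C (p.eval a)] Q) = 0)
    (hcard : (D : ℝ) / m < A.card) :
    (MvPolynomial.X 1 - Polynomial.aeval (MvPolynomial.X 0) p) ∣ Q := by
  classical
  set q : Polynomial F := MvPolynomial.aeval ![Polynomial.X, p] Q with hq
  have hq0 : q = 0 := by
    by_contra hq0
    have hdvd : ∀ a ∈ A, m ≤ q.roots.count a := by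
      intro a haA
      rw [Polynomial.count_roots, Polynomial.le_rootMultiplicity_iff hq0]
      exact keyC Q p a (hA a haA)
    have h1 : m * A.card ≤ Multiset.card q.roots := by
      calc m * A.card = ∑ _a ∈ A, m := by rw [Finset.sum_const, smul_eq_mul, mul_comm]
        _ ≤ ∑ a ∈ A, q.roots.count a := Finset.sum_le_sum hdvd
        _ = ∑ a ∈ A ∩ q.roots.toFinset, q.roots.count a := by
            refine (Finset.sum_subset Finset.inter_subset_left ?_).symm
            intro x hx hx2
            rw [Multiset.count_eq_zero]
            intro hmem
            exact hx2 (Finset.mem_inter.mpr ⟨hx, Multiset.mem_toFinset.mpr hmem⟩)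
        _ ≤ ∑ a ∈ q.roots.toFinset, q.roots.count a :=
            Finset.sum_le_sum_of_subset Finset.inter_subset_right
        _ = Multiset.card q.roots := Multiset.toFinset_sum_count_eq _
    have h2 : m * A.card ≤ D :=
      le_trans h1 (le_trans (Polynomial.card_roots' q) (keyB Q hD p hp))
    have hm0 : (0 : ℝ) < m := by exact_mod_cast Nat.lt_of_lt_of_le Nat.zero_lt_one hm
    rw [div_lt_iff₀ hm0] at hcard
    have h2' : (m : ℝ) * A.card ≤ D := by exact_mod_cast h2
    nlinarith [hcard, h2']
  exact keyA Q p hq0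
end

section
/- Imposing a root of multiplicity m at a single point (a,b) ∈ F² on a bivariate polynomial Q ∈ F[X,Y] amounts to m(m+1)/2 homogeneous linear conditions on the coefficients of Q; consequently, for S ⊆ F with |S| = n, a function r : S → F, and any D such that the number of monomials of (1,k-1)-weighted degree at most D exceeds n·m(m+1)/2, there exists a nonzero Q of (1,k-1)-weighted degree at most D having a root of multiplicity m at (a, r(a)) for every a ∈ S. -/
open MvPolynomial Finsupp

private lemma stmt10_Tcard (m : ℕ) :
    (((Finset.range m) ×ˢ (Finset.range m)).filter (fun p => p.1 + p.2 < m)).card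
      = m * (m + 1) / 2 := by
  have h : (((Finset.range m) ×ˢ (Finset.range m)).filter (fun p => p.1 + p.2 < m))
      = (Finset.range m).biUnion (fun s => Finset.HasAntidiagonal.antidiagonal s) := by
    ext p
    simp only [Finset.mem_filter, Finset.mem_product, Finset.mem_range,
      Finset.mem_biUnion, Finset.HasAntidiagonal.mem_antidiagonal]
    constructor
    · rintro ⟨⟨h1, h2⟩, h3⟩; exact ⟨p.1 + p.2, h3, rfl⟩
    · rintro ⟨s, hs, hp⟩
      refine ⟨⟨?_, ?_⟩, ?_⟩ <;> omega
  rw [h, Finset.card_biUnion]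
  · have : ∑ s ∈ Finset.range m, (Finset.HasAntidiagonal.antidiagonal s).card
        = ∑ s ∈ Finset.range m, (s + 1) := by
      simp [Finset.Nat.card_antidiagonal]
    rw [this]
    have h2 : ∑ s ∈ Finset.range (m + 1), s = ∑ s ∈ Finset.range m, (s + 1) := by
      rw [Finset.sum_range_succ']
      simp
    rw [← h2, Finset.sum_range_id]
    simp [Nat.mul_comm]
  · intro x _ y _ hxy
    simp only [Finset.disjoint_left, Finset.HasAntidiagonal.mem_antidiagonal]
    intro a h1 h2; exact hxy (h1 ▸ h2)

private lemma stmt10_e_inj : Function.Injective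
    (fun p : ℕ × ℕ => Finsupp.single (0 : Fin 2) p.1 + Finsupp.single (1 : Fin 2) p.2) := by
  intro p q h
  have h0 := congrArg (fun f => f 0) h
  have h1 := congrArg (fun f => f 1) h
  simp [Finsupp.single_apply] at h0 h1
  exact Prod.ext h0 h1

/-- Multiplicity interpolation: if the number of monomials of `(1,k-1)`-weighted degree
at most `D` exceeds `n · m(m+1)/2`, then there is a nonzero `Q` of `(1,k-1)`-weighted
degree at most `D` with a root of multiplicity `m` at `(a, r a)` for every `a ∈ S`. -/
theorem stmt_10 {F : Type*} [Field F] [Fintype F] {n k D m : ℕ}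
    (hk : 2 ≤ k) (hm : 1 ≤ m)
    (S : Finset F) (hS : S.card = n) (r : F → F)
    (hcount : n * (m * (m + 1) / 2) <
      ((Finset.range (D + 1) ×ˢ Finset.range (D + 1)).filter
        (fun ij => ij.1 + ij.2 * (k - 1) ≤ D)).card) :
    ∃ Q : MvPolynomial (Fin 2) F, Q ≠ 0 ∧
      MvPolynomial.weightedTotalDegree ![1, k - 1] Q ≤ D ∧
      ∀ a ∈ S, ∀ d : Fin 2 →₀ ℕ, d 0 + d 1 < m →
        MvPolynomial.coeff d
          (MvPolynomial.aeval
            ![MvPolynomial.X 0 + MvPolynomial.C a,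
              MvPolynomial.X 1 + MvPolynomial.C (r a)] Q) = 0 := by
  classical
  set Mset := ((Finset.range (D + 1) ×ˢ Finset.range (D + 1)).filter
      (fun ij => ij.1 + ij.2 * (k - 1) ≤ D)) with hMset
  set T := (((Finset.range m) ×ˢ (Finset.range m)).filter (fun p => p.1 + p.2 < m)) with hT
  set e : ℕ × ℕ → (Fin 2 →₀ ℕ) :=
    fun p => Finsupp.single (0 : Fin 2) p.1 + Finsupp.single (1 : Fin 2) p.2 with he
  -- the polynomial built from a coefficient vector
  set toPoly : (↥Mset → F) →ₗ[F] MvPolynomial (Fin 2) F :=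
    { toFun := fun c => ∑ p : ↥Mset, MvPolynomial.monomial (e p.1) (c p)
      map_add' := by
        intro c d
        simp [map_add, Finset.sum_add_distrib]
      map_smul' := by
        intro t c
        simp only [RingHom.id_apply, Finset.smul_sum]
        refine Finset.sum_congr rfl fun x _ => ?_
        rw [MvPolynomial.smul_monomial, Pi.smul_apply, smul_eq_mul] } with htoPoly
  set evLin : MvPolynomial (Fin 2) F →ₗ[F] (↥(S ×ˢ T) → F) :=
    { toFun := fun Q x => MvPolynomial.coeff (e x.1.2)
        (MvPolynomial.aeval
          ![MvPolynomial.X 0 + MvPolynomial.C x.1.1,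
            MvPolynomial.X 1 + MvPolynomial.C (r x.1.1)] Q)
      map_add' := by intro Q R; funext x; simp
      map_smul' := by intro t Q; funext x; simp } with hevLin
  -- coefficient extraction
  have hcoeff : ∀ (c : ↥Mset → F) (p : ↥Mset),
      MvPolynomial.coeff (e p.1) (toPoly c) = c p := by
    intro c p
    show MvPolynomial.coeff (e p.1) (∑ q : ↥Mset, MvPolynomial.monomial (e q.1) (c q)) = c p
    rw [MvPolynomial.coeff_sum, Finset.sum_eq_single p]
    · simp [MvPolynomial.coeff_monomial]
    · intro q _ hq
      rw [MvPolynomial.coeff_monomial, if_neg]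
      intro h
      exact hq (Subtype.ext (stmt10_e_inj h))
    · simp
  -- dimension count
  have hrank : Fintype.card ↥(S ×ˢ T) < Fintype.card ↥Mset := by
    rw [Fintype.card_coe, Fintype.card_coe, Finset.card_product, hS, hT, stmt10_Tcard]
    exact hcount
  have hker : ∃ c : ↥Mset → F, c ≠ 0 ∧ (evLin ∘ₗ toPoly) c = 0 := by
    by_contra h
    push_neg at h
    have hinj : Function.Injective (evLin ∘ₗ toPoly) := by
      rw [← LinearMap.ker_eq_bot, LinearMap.ker_eq_bot']
      intro c hc
      by_contra hc0
      exact (h c hc0) hc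
    have := LinearMap.finrank_le_finrank_of_injective hinj
    rw [Module.finrank_fintype_fun_eq_card, Module.finrank_fintype_fun_eq_card] at this
    omega
  obtain ⟨c, hc0, hc⟩ := hker
  refine ⟨toPoly c, ?_, ?_, ?_⟩
  · -- nonzero
    intro hQ
    apply hc0
    funext p
    have := hcoeff c p
    rw [hQ] at this
    simpa using this.symm
  · -- weighted degree
    rw [MvPolynomial.weightedTotalDegree]
    apply Finset.sup_le
    intro d hd
    have hsub := MvPolynomial.support_sum (s := Finset.univ)
      (f := fun p : ↥Mset => MvPolynomial.monomial (e p.1) (c p)) hd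
    rw [Finset.mem_biUnion] at hsub
    obtain ⟨p, -, hp⟩ := hsub
    have hd' : d = e p.1 := by
      by_cases hcp : c p = 0
      · simp [MvPolynomial.support_monomial, hcp] at hp
      · simp [MvPolynomial.support_monomial, hcp] at hp
        exact hp
    have hpm : p.1.1 + p.1.2 * (k - 1) ≤ D := (Finset.mem_filter.mp p.2).2
    have hw : Finsupp.weight ![1, k - 1] (e p.1) = p.1.1 + p.1.2 * (k - 1) := by
      show Finsupp.weight ![1, k - 1]
        (Finsupp.single (0 : Fin 2) p.1.1 + Finsupp.single (1 : Fin 2) p.1.2) = _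
      rw [map_add, Finsupp.weight_apply, Finsupp.weight_apply,
        Finsupp.sum_single_index (by simp), Finsupp.sum_single_index (by simp)]
      simp [smul_eq_mul]
    have h2 : Finsupp.weight ![1, k - 1] d = Finsupp.weight ![1, k - 1] (e p.1) :=
      congrArg _ hd'
    exact (h2.trans hw).trans_le hpm
  · -- vanishing conditions
    intro a ha d hdm
    have hde : d = e (d 0, d 1) := by
      ext x
      fin_cases x <;> simp [he, Finsupp.single_apply]
    have hmem : (a, (d 0, d 1)) ∈ S ×ˢ T := by
      simp only [Finset.mem_product, hT, Finset.mem_filter, Finset.mem_range]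
      exact ⟨ha, ⟨by omega, by omega⟩, hdm⟩
    have := congrFun hc ⟨(a, (d 0, d 1)), hmem⟩
    rw [hde]
    simpa [hevLin] using this
end

section
/- (Inclusion-exclusion list-size bound) Let S be a finite set of size n and let S_1, …, S_L ⊆ S satisfy |S_i| ≥ t for all i and |S_i ∩ S_j| ≤ k - 1 for all i ≠ j. If t ≥ √(2nk) and t ≥ k, then L ≤ 2n/k. -/
lemma bonf {α : Type*} [DecidableEq α] {L : ℕ} (Si : Fin L → Finset α)
    (A : Finset (Fin L)) :
    2 * ∑ i ∈ A, (Si i).card ≤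
      2 * (A.biUnion Si).card + ∑ p ∈ A.offDiag, (Si p.1 ∩ Si p.2).card := by

  induction A using Finset.induction_on with
  | empty => simp
  | @insert a A ha ih =>
    rw [Finset.sum_insert ha, Finset.biUnion_insert, Finset.offDiag_insert ha]
    have hd1 : Disjoint (A.offDiag ∪ {a} ×ˢ A) (A ×ˢ {a}) := by
      rw [Finset.disjoint_union_left]
      constructor
      · rw [Finset.disjoint_left]
        rintro ⟨x, y⟩ hod hxy
        simp only [Finset.mem_product, Finset.mem_singleton, Finset.mem_offDiag] at hod hxy
        exact ha (hxy.2 ▸ hod.2.1)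
      · rw [Finset.disjoint_left]
        rintro ⟨x, y⟩ hm hxy
        simp only [Finset.mem_product, Finset.mem_singleton] at hm hxy
        exact ha (hm.1 ▸ hxy.1)
    have hd2 : Disjoint A.offDiag ({a} ×ˢ A) := by
      rw [Finset.disjoint_right]
      rintro ⟨x, y⟩ hm hod
      simp only [Finset.mem_product, Finset.mem_singleton, Finset.mem_offDiag] at hm hod
      exact ha (hm.1 ▸ hod.1)
    rw [Finset.sum_union hd1, Finset.sum_union hd2]
    have e1 : ∑ p ∈ {a} ×ˢ A, (Si p.1 ∩ Si p.2).card
        = ∑ i ∈ A, (Si a ∩ Si i).card := by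
      rw [Finset.singleton_product, Finset.sum_map]; rfl
    have e2 : ∑ p ∈ A ×ˢ {a}, (Si p.1 ∩ Si p.2).card
        = ∑ i ∈ A, (Si i ∩ Si a).card := by
      rw [Finset.product_singleton, Finset.sum_map]; rfl
    have e3 : ∑ i ∈ A, (Si i ∩ Si a).card = ∑ i ∈ A, (Si a ∩ Si i).card := by
      simp [Finset.inter_comm]
    have key : (Si a).card + (A.biUnion Si).card
        ≤ ((Si a ∪ A.biUnion Si)).card + ∑ i ∈ A, (Si a ∩ Si i).card := by
      rw [← Finset.card_union_add_card_inter]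
      gcongr
      rw [Finset.inter_biUnion]
      exact Finset.card_biUnion_le
    rw [e1, e2, e3]
    omega
    

set_option maxHeartbeats 1000000 in
/-- Inclusion-exclusion list-size bound: subsets `S_1, …, S_L` of an `n`-set, each of
size at least `t`, with pairwise intersections of size at most `k-1`, satisfy
`L ≤ 2n/k` provided `t ≥ √(2nk)` and `t ≥ k`. -/
theorem stmt_11 {α : Type*} [DecidableEq α] {n t k L : ℕ} (hk : 1 ≤ k)
    (S : Finset α) (hS : S.card = n)
    (Si : Fin L → Finset α) (hsub : ∀ i, Si i ⊆ S)
    (ht : ∀ i, t ≤ (Si i).card)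
    (hint : ∀ i j, i ≠ j → (Si i ∩ Si j).card ≤ k - 1)
    (h1 : Real.sqrt (2 * n * k) ≤ t) (h2 : k ≤ t) :
    (L : ℝ) ≤ 2 * n / k := by
  by_contra hL
  push_neg at hL
  have hk0R : (0:ℝ) < k := by exact_mod_cast hk
  have hnk : 2 * n < L * k := by
    have := (div_lt_iff₀ hk0R).mp hL
    exact_mod_cast this
  have hL1 : 0 < L := by
    rcases Nat.eq_zero_or_pos L with h | h
    · rw [h] at hnk; omega
    · exact h
  have htn : t ≤ n := by
    have := ht ⟨0, hL1⟩
    have h2' := Finset.card_le_card (hsub ⟨0, hL1⟩)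
    omega
  have hn1 : 1 ≤ n := by omega
  have ht0 : 0 < t := by omega
  obtain ⟨m, hm⟩ : ∃ m, m = 2 * n / t + 1 := ⟨_, rfl⟩
  have hmt1 : 2 * n < m * t := by
    rw [hm]; exact (Nat.div_lt_iff_lt_mul ht0).mp (Nat.lt_succ_self _)
  have hmt2 : m * t ≤ 2 * n + t := by
    have h3 := Nat.div_mul_le_self (2 * n) t
    have h4 : m * t = (2 * n / t) * t + t := by rw [hm]; ring
    omega
  have hmL : m ≤ L := by
    have h4 : 2 * n < L * t := lt_of_lt_of_le hnk (Nat.mul_le_mul_left L h2)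
    have := (Nat.div_lt_iff_lt_mul ht0).mpr h4
    omega
  obtain ⟨A, -, hAcard⟩ := Finset.exists_subset_card_eq (s := (Finset.univ : Finset (Fin L))) (n := m)
    (by simpa using hmL)
  have hb := bonf Si A
  have hU : (A.biUnion Si).card ≤ n := by
    rw [← hS]
    exact Finset.card_le_card (Finset.biUnion_subset.mpr fun i _ => hsub i)
  have hsum : m * t ≤ ∑ i ∈ A, (Si i).card := by
    calc m * t = ∑ _i ∈ A, t := by rw [Finset.sum_const, hAcard, smul_eq_mul]
    _ ≤ ∑ i ∈ A, (Si i).card := Finset.sum_le_sum fun i _ => ht i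
  have hP : ∑ p ∈ A.offDiag, (Si p.1 ∩ Si p.2).card ≤ (m * m - m) * (k - 1) := by
    calc ∑ p ∈ A.offDiag, (Si p.1 ∩ Si p.2).card
        ≤ ∑ _p ∈ A.offDiag, (k - 1) :=
          Finset.sum_le_sum fun p hp => hint p.1 p.2 (Finset.mem_offDiag.mp hp).2.2
    _ = A.offDiag.card * (k - 1) := by rw [Finset.sum_const, smul_eq_mul]
    _ = (m * m - m) * (k - 1) := by rw [Finset.offDiag_card, hAcard]
  have hnat : 2 * (m * t) ≤ 2 * n + (m * m - m) * (k - 1) := by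
    calc 2 * (m * t) ≤ 2 * ∑ i ∈ A, (Si i).card := Nat.mul_le_mul_left 2 hsum
    _ ≤ 2 * (A.biUnion Si).card + ∑ p ∈ A.offDiag, (Si p.1 ∩ Si p.2).card := hb
    _ ≤ 2 * n + (m * m - m) * (k - 1) :=
          add_le_add (Nat.mul_le_mul_left 2 hU) hP
  -- move to the reals
  have hm1 : 1 ≤ m := hm ▸ Nat.succ_le_succ (Nat.zero_le _)
  have hmm : m ≤ m * m := Nat.le_mul_of_pos_left m (by omega)
  have hmainR : 2 * ((m:ℝ) * t) ≤ 2 * n + ((m:ℝ) * m - m) * ((k:ℝ) - 1) := by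
    have h5 := (Nat.cast_le (α := ℝ)).mpr hnat
    push_cast [Nat.cast_sub hmm, Nat.cast_sub hk] at h5
    linarith
  have ht2 : 2 * (n:ℝ) * k ≤ (t:ℝ) ^ 2 := by
    have h0 : (0:ℝ) ≤ 2 * (n:ℝ) * k := by positivity
    nlinarith [Real.sq_sqrt h0, Real.sqrt_nonneg (2 * (n:ℝ) * k)]
  have hA1 : 2 * (n:ℝ) < (m:ℝ) * t := by exact_mod_cast hmt1
  have hA2 : (m:ℝ) * t ≤ 2 * (n:ℝ) + t := by exact_mod_cast hmt2
  have hNR : (1:ℝ) ≤ n := by exact_mod_cast hn1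
  have hKR : (1:ℝ) ≤ k := by exact_mod_cast hk
  have hTK : (k:ℝ) ≤ t := by exact_mod_cast h2
  have f0 : (0:ℝ) ≤ (t:ℝ) ^ 2 * (2 * n + ((m:ℝ) * m - m) * ((k:ℝ) - 1) - 2 * ((m:ℝ) * t)) :=
    mul_nonneg (sq_nonneg _) (by linarith)
  have f1 : (0:ℝ) ≤ 2 * (n:ℝ) * ((t:ℝ) ^ 2 - 2 * n * k) := by
    apply mul_nonneg (by linarith) (by linarith)
  have f2 : (0:ℝ) ≤ 2 * ((m:ℝ) * t - 2 * n) * ((t:ℝ) ^ 2 - 2 * n * k) :=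
    mul_nonneg (by linarith) (by linarith)
  have f3 : (0:ℝ) ≤ ((k:ℝ) - 1) * (((m:ℝ) * t - 2 * n) * ((t:ℝ) - ((m:ℝ) * t - 2 * n))) :=
    mul_nonneg (by linarith) (mul_nonneg (by linarith) (by linarith))
  have f4 : (0:ℝ) < 4 * (n:ℝ) * ((m:ℝ) * t - 2 * n) :=
    mul_pos (by linarith) (by linarith)
  have f5 : (0:ℝ) ≤ 2 * (n:ℝ) * t * ((k:ℝ) - 1) := by
    apply mul_nonneg _ (by linarith)
    apply mul_nonneg (by linarith)
    exact_mod_cast Nat.zero_le t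
  have f6 : (0:ℝ) ≤ 4 * (n:ℝ) * n := by positivity
  linarith [f0, f1, f2, f3, f4, f5, f6]
end

section
/- (Existence of the interpolation polynomial in overlapping FRS decoding) Let F be a finite field, s ≥ 1, k ≤ n, S ⊆ F with |S| = n, and r : S → F^s. Then there exists a nonzero polynomial Q(X, Y_1, …, Y_s) = A_0(X) + Σ_{i=1}^s A_i(X)·Y_i with deg(A_0) < (n−k)/(s+1) + k and deg(A_i) ≤ (n−k)/(s+1) for 1 ≤ i ≤ s, such that Q(a, r(a)_1, …, r(a)_s) = 0 for all a ∈ S. -/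
open Polynomial

noncomputable def polyOf {F : Type*} [Semiring F] {m : ℕ} (c : Fin m → F) : Polynomial F :=
  ∑ j : Fin m, Polynomial.monomial (j : ℕ) (c j)

lemma polyOf_eval {F : Type*} [CommSemiring F] {m : ℕ} (c : Fin m → F) (a : F) :
    (polyOf c).eval a = ∑ j, c j * a ^ (j : ℕ) := by
  simp [polyOf, Polynomial.eval_finset_sum]

lemma polyOf_natDegree {F : Type*} [Semiring F] {m : ℕ} (c : Fin (m + 1) → F) :
    (polyOf c).natDegree ≤ m := by
  unfold polyOf
  apply Polynomial.natDegree_sum_le_of_forall_le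
  intro j _
  exact (Polynomial.natDegree_monomial_le _).trans (Nat.lt_succ_iff.mp j.isLt)

lemma polyOf_coeff {F : Type*} [Semiring F] {m : ℕ} (c : Fin m → F) (i : Fin m) :
    (polyOf c).coeff i = c i := by
  simp only [polyOf, Polynomial.finset_sum_coeff, Polynomial.coeff_monomial]
  rw [Finset.sum_eq_single i]
  · simp
  · intro j _ hj
    simp [Fin.val_eq_val, hj]
  · simp

/-- Existence of the interpolation polynomial in overlapping FRS decoding: there exist
`A_0, A_1, …, A_s`, not all zero, with `deg A_0 < (n−k)/(s+1) + k` and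
`deg A_i ≤ (n−k)/(s+1)`, such that `A_0(a) + Σ_i A_i(a)·r(a)_i = 0` for all `a ∈ S`. -/
theorem stmt_13 {F : Type*} [Field F] [Fintype F] {n k s : ℕ}
    (hs : 1 ≤ s) (hkn : k ≤ n)
    (S : Finset F) (hS : S.card = n) (r : F → Fin s → F) :
    ∃ (A0 : Polynomial F) (A : Fin s → Polynomial F),
      ¬(A0 = 0 ∧ ∀ i, A i = 0) ∧
      (A0 = 0 ∨ (A0.natDegree : ℝ) < ((n : ℝ) - k) / (s + 1) + k) ∧
      (∀ i, ((A i).natDegree : ℝ) ≤ ((n : ℝ) - k) / (s + 1)) ∧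
      ∀ a ∈ S, A0.eval a + ∑ i, (A i).eval a * r a i = 0 := by
  classical
  rcases Nat.eq_zero_or_pos n with hn0 | hn
  · subst hn0
    have hk0 : k = 0 := Nat.le_zero.mp hkn
    have hSe : S = ∅ := Finset.card_eq_zero.mp hS
    refine ⟨0, fun _ => 1, ?_, Or.inl rfl, ?_, ?_⟩
    · rintro ⟨-, h⟩
      exact one_ne_zero (h ⟨0, hs⟩)
    · intro i
      simp [hk0]
    · intro a ha
      simp [hSe] at ha
  · set d : ℕ := (n - k) / (s + 1) with hd
    set D0 : ℕ := n - s * (d + 1) with hD0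
    set c0 : ℕ := D0 + 1 with hc0
    -- cardinality bound
    have hq : 1 < Fintype.card F := Fintype.one_lt_card
    have hcount : n < c0 + (d + 1) * s := by
      have h1 : (d + 1) * s = s * (d + 1) := mul_comm _ _
      omega
    have hcard : Fintype.card (↥S → F) <
        Fintype.card ((Fin c0 → F) × (Fin s → Fin (d + 1) → F)) := by
      simp only [Fintype.card_fun, Fintype.card_prod, Fintype.card_fin, Fintype.card_coe, hS]
      rw [← pow_mul, ← pow_add]
      exact Nat.pow_lt_pow_right hq hcount
    set f : ((Fin c0 → F) × (Fin s → Fin (d + 1) → F)) → (↥S → F) :=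
      fun p a => (polyOf p.1).eval (a : F) + ∑ i, (polyOf (p.2 i)).eval (a : F) * r a i with hf
    obtain ⟨x, y, hxy, hfxy⟩ := Fintype.exists_ne_map_eq_of_card_lt f hcard
    refine ⟨polyOf (x.1 - y.1), fun i => polyOf (x.2 i - y.2 i), ?_, ?_, ?_, ?_⟩
    · rintro ⟨h0, hA⟩
      apply hxy
      refine Prod.ext ?_ ?_
      · funext j
        have hc := polyOf_coeff (x.1 - y.1) j
        rw [h0] at hc
        simp only [Polynomial.coeff_zero, Pi.sub_apply] at hc
        exact sub_eq_zero.mp hc.symm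
      · funext i j
        have hAi : polyOf (x.2 i - y.2 i) = 0 := hA i
        have hc := polyOf_coeff (x.2 i - y.2 i) j
        rw [hAi] at hc
        simp only [Polynomial.coeff_zero, Pi.sub_apply] at hc
        exact sub_eq_zero.mp hc.symm
    · right
      have hdeg : (polyOf (x.1 - y.1)).natDegree ≤ D0 := polyOf_natDegree _
      have hsR : (0 : ℝ) < (s : ℝ) + 1 := by positivity
      have hcast : ((polyOf (x.1 - y.1)).natDegree : ℝ) ≤ (D0 : ℝ) := by exact_mod_cast hdeg
      refine lt_of_le_of_lt hcast ?_
      rcases le_or_gt n (s * (d + 1)) with hle | hlt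
      · have : D0 = 0 := by omega
        rw [this, Nat.cast_zero]
        have heq : ((n : ℝ) - k) / (s + 1) + k = ((n : ℝ) + k * s) / (s + 1) := by
          field_simp
          ring
        rw [heq]
        apply div_pos _ hsR
        have : (1 : ℝ) ≤ (n : ℝ) := by exact_mod_cast hn
        positivity
      · -- D0 = n - s*(d+1) with s*(d+1) < n
        have hle2 : s * (d + 1) ≤ n := hlt.le
        have hD0cast : (D0 : ℝ) = (n : ℝ) - (s : ℝ) * ((d : ℝ) + 1) := by
          rw [hD0, Nat.cast_sub hle2]
          push_cast
          ring
        have h1 : n - k < (s + 1) * (d + 1) := by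
          have h2 := Nat.lt_mul_div_succ (n - k) (show 0 < s + 1 by omega)
          simpa [hd] using h2
        have h1R : (n : ℝ) - (k : ℝ) < ((s : ℝ) + 1) * ((d : ℝ) + 1) := by
          have : ((n - k : ℕ) : ℝ) < (((s + 1) * (d + 1) : ℕ) : ℝ) := by exact_mod_cast h1
          rw [Nat.cast_sub hkn] at this
          push_cast at this
          linarith
        have hsR1 : (1 : ℝ) ≤ (s : ℝ) := by exact_mod_cast hs
        rw [hD0cast, div_add' _ _ _ (ne_of_gt hsR), lt_div_iff₀ hsR]
        nlinarith [mul_lt_mul_of_pos_left h1R (lt_of_lt_of_le zero_lt_one hsR1)]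
    · intro i
      have hdeg : (polyOf (x.2 i - y.2 i)).natDegree ≤ d := polyOf_natDegree _
      have h1 : ((d : ℕ) : ℝ) ≤ ((n - k : ℕ) : ℝ) / ((s + 1 : ℕ) : ℝ) := by
        rw [hd]
        exact Nat.cast_div_le
      rw [Nat.cast_sub hkn] at h1
      push_cast at h1
      have : ((polyOf (x.2 i - y.2 i)).natDegree : ℝ) ≤ (d : ℝ) := by exact_mod_cast hdeg
      linarith
    · intro a ha
      have hx := congrFun hfxy ⟨a, ha⟩
      simp only [hf] at hx
      simp only [polyOf_eval, Pi.sub_apply, sub_mul, Finset.sum_sub_distrib] at hx ⊢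
      linear_combination hx
end
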